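/- For every α ∈ [1,2] and every s > 0, one has |((1+s)·e^{-αs} - 1)/s| ≤ e^{α-2}. In particular, sup_{s>0} |((1+s)e^{-αs}-1)/s| ≤ e^{α-2}. -/

import Mathlib

open Real

lemma key_mono (α : ℝ) (hα1 : 1 ≤ α) (s : ℝ) (hs : 0 < s) :
    1 ≤ s * Real.exp (α - 2) + (1 + s) * Real.exp (-α * s) := by
  set φ : ℝ → ℝ := fun x => x * Real.exp (α - 2) + (1 + x) * Real.exp (-α * x) with hφ
  have hd : ∀ x : ℝ, HasDerivAt φ
      (Real.exp (α - 2) + (1 - α * (1 + x)) * Real.exp (-α * x)) x := by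
    intro x
    have h2 : HasDerivAt (fun x : ℝ => Real.exp (-α * x)) (-α * Real.exp (-α * x)) x := by
      have h := ((hasDerivAt_id x).const_mul (-α)).exp
      simpa [mul_comm] using h
    have h1 : HasDerivAt (fun x : ℝ => x * Real.exp (α - 2)) (Real.exp (α - 2)) x := by
      simpa using (hasDerivAt_id x).mul_const (Real.exp (α - 2))
    have h3 : HasDerivAt (fun x : ℝ => (1 + x) * Real.exp (-α * x))
        (1 * Real.exp (-α * x) + (1 + x) * (-α * Real.exp (-α * x))) x :=
      ((hasDerivAt_id x).const_add 1).mul h2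
    have := h1.add h3
    refine this.congr_deriv ?_
    ring
  have hderiv_nonneg : ∀ x : ℝ, 0 ≤ Real.exp (α - 2) + (1 - α * (1 + x)) * Real.exp (-α * x) := by
    intro x
    have h1 : α * (1 + x) - 1 ≤ Real.exp (α * x + α - 2) := by
      have := Real.add_one_le_exp (α * x + α - 2)
      linarith
    have h2 : (α * (1 + x) - 1) * Real.exp (-α * x)
        ≤ Real.exp (α * x + α - 2) * Real.exp (-α * x) :=
      mul_le_mul_of_nonneg_right h1 (Real.exp_pos _).le
    have h3 : Real.exp (α * x + α - 2) * Real.exp (-α * x) = Real.exp (α - 2) := by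
      rw [← Real.exp_add]; ring_nf
    nlinarith [h2, h3]
  have hmono : MonotoneOn φ (Set.Ici (0 : ℝ)) := by
    apply monotoneOn_of_deriv_nonneg (convex_Ici 0)
    · exact Continuous.continuousOn (by
        continuity)
    · intro x hx
      exact (hd x).differentiableAt.differentiableWithinAt
    · intro x hx
      rw [(hd x).deriv]
      exact hderiv_nonneg x
  have h0 : φ 0 ≤ φ s := hmono (Set.self_mem_Ici) (Set.mem_Ici.mpr hs.le) hs.le
  simp only [hφ, zero_mul, zero_add, mul_zero, neg_zero, Real.exp_zero, mul_one, add_zero] at h0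
  linarith

theorem stmt_1 (α : ℝ) (hα : α ∈ Set.Icc (1:ℝ) 2) (s : ℝ) (hs : 0 < s) :
    |((1 + s) * Real.exp (-α * s) - 1) / s| ≤ Real.exp (α - 2) := by
  obtain ⟨hα1, hα2⟩ := hα
  have hnonpos : (1 + s) * Real.exp (-α * s) - 1 ≤ 0 := by
    have h1 : Real.exp (-α * s) ≤ Real.exp (-s) :=
      Real.exp_le_exp.mpr (by nlinarith)
    have h2 : (1 + s) * Real.exp (-s) ≤ 1 := by
      have h3 : 1 + s ≤ Real.exp s := by
        have := Real.add_one_le_exp s; linarith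
      have h4 : (1 + s) * Real.exp (-s) ≤ Real.exp s * Real.exp (-s) :=
        mul_le_mul_of_nonneg_right h3 (Real.exp_pos _).le
      rwa [← Real.exp_add, add_neg_cancel, Real.exp_zero] at h4
    nlinarith [Real.exp_pos (-α * s), Real.exp_pos (-s)]
  have hkey := key_mono α hα1 s hs
  rw [abs_div, abs_of_pos hs, abs_of_nonpos hnonpos, div_le_iff₀ hs]
  nlinarith
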